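/- Let μ, r ∈ ℝ, σ > 0, T > 0, δ, ε ∈ (0,1), ξ ~ N(0,1), and I_T = e^{(μ−σ²/2)T + σ√T ξ}. If |r + σ² − μ| ≥ (z_{δ/2} + z_ε)σ/√T, then P( I_T/e^{rT} ∈ ( e^{σ²T/2 − z_{δ/2}σ√T}, e^{σ²T/2 + z_{δ/2}σ√T} ) ) ≤ ε. -/

import Mathlib

open MeasureTheory ProbabilityTheory Real Set

lemma gauss_neg_symm (w : ℝ) :
    gaussianReal 0 1 (Set.Iic (-w)) = gaussianReal 0 1 (Set.Ici w) := by
  have h := ProbabilityTheory.gaussianReal_map_const_mul (μ := 0) (v := 1) (-1)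
  have h' : (gaussianReal 0 1).map (fun x : ℝ => (-1) * x) = gaussianReal 0 1 := by
    convert h using 2 <;> norm_num
  have h3 := congrArg (fun m : Measure ℝ => m (Set.Iic (-w))) h' 
  rw [Measure.map_apply (by fun_prop) measurableSet_Iic] at h3
  have hset : (fun x : ℝ => (-1) * x) ⁻¹' Set.Iic (-w) = Set.Ici w := by
    ext x; simp
  rw [hset] at h3
  exact h3.symm

/-- if `|r + σ² − μ| ≥ (z_{δ/2} + z_ε)σ/√T` then the probability that
`I_T/e^{rT}` lies in `(e^{σ²T/2 − z_{δ/2}σ√T}, e^{σ²T/2 + z_{δ/2}σ√T})` is at most `ε`. -/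
theorem stmt7 {Ω : Type*} [MeasurableSpace Ω] (P : Measure Ω) [IsProbabilityMeasure P]
    (ξ : Ω → ℝ) (hξm : Measurable ξ) (hξ : P.map ξ = gaussianReal 0 1)
    (μ r σ T δ ε z w : ℝ) (hσ : 0 < σ) (hT : 0 < T)
    (hδ : 0 < δ ∧ δ < 1) (hε : 0 < ε ∧ ε < 1)
    (hz : gaussianReal 0 1 (Set.Ici z) = ENNReal.ofReal (δ / 2))
    (hw : gaussianReal 0 1 (Set.Ici w) = ENNReal.ofReal ε)
    (hc : (z + w) * σ / Real.sqrt T ≤ |r + σ ^ 2 - μ|) :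
    P {ω | Real.exp ((μ - σ ^ 2 / 2) * T + σ * Real.sqrt T * ξ ω) / Real.exp (r * T) ∈
        Set.Ioo (Real.exp (σ ^ 2 * T / 2 - z * σ * Real.sqrt T))
          (Real.exp (σ ^ 2 * T / 2 + z * σ * Real.sqrt T))}
      ≤ ENNReal.ofReal ε := by
  have hsT : 0 < Real.sqrt T := Real.sqrt_pos.mpr hT
  have hsT2 : Real.sqrt T * Real.sqrt T = T := Real.mul_self_sqrt hT.le
  have hpos : 0 < σ * Real.sqrt T := mul_pos hσ hsT
  set a : ℝ := (r + σ ^ 2 - μ) * Real.sqrt T / σ with ha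
  have haσ : a * σ = (r + σ ^ 2 - μ) * Real.sqrt T := by
    rw [ha, div_mul_cancel₀ _ hσ.ne']
  have haσT : a * (σ * Real.sqrt T) = (r + σ ^ 2 - μ) * T := by
    rw [← mul_assoc, haσ, mul_assoc, hsT2]
  -- rewrite the event set
  have hset : {ω | Real.exp ((μ - σ ^ 2 / 2) * T + σ * Real.sqrt T * ξ ω) / Real.exp (r * T) ∈
        Set.Ioo (Real.exp (σ ^ 2 * T / 2 - z * σ * Real.sqrt T))
          (Real.exp (σ ^ 2 * T / 2 + z * σ * Real.sqrt T))}
      = ξ ⁻¹' Set.Ioo (a - z) (a + z) := by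
    ext ω
    simp only [Set.mem_setOf_eq, Set.mem_preimage, Set.mem_Ioo, ← Real.exp_sub,
      Real.exp_lt_exp]
    constructor
    · rintro ⟨h1, h2⟩
      constructor
      · have : (a - z) * (σ * Real.sqrt T) < ξ ω * (σ * Real.sqrt T) := by nlinarith [haσT]
        exact lt_of_mul_lt_mul_right (by linarith) hpos.le
      · have : ξ ω * (σ * Real.sqrt T) < (a + z) * (σ * Real.sqrt T) := by nlinarith [haσT]
        exact lt_of_mul_lt_mul_right (by linarith) hpos.le
    · rintro ⟨h1, h2⟩
      have h1' := mul_lt_mul_of_pos_right h1 hpos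
      have h2' := mul_lt_mul_of_pos_right h2 hpos
      constructor <;> nlinarith [haσT]
  rw [hset, ← Measure.map_apply hξm measurableSet_Ioo, hξ]
  -- |a| ≥ z + w
  have habs : z + w ≤ |a| := by
    have h1 : |a| = |r + σ ^ 2 - μ| * Real.sqrt T / σ := by
      rw [ha, abs_div, abs_mul, abs_of_pos hσ, abs_of_pos hsT]
    rw [h1, le_div_iff₀ hσ]
    rw [div_le_iff₀ hsT] at hc
    nlinarith
  rcases le_abs.mp habs with hA | hA
  · -- a ≥ z + w : interval ⊆ Ioi w ⊆ Ici w
    calc gaussianReal 0 1 (Set.Ioo (a - z) (a + z))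
        ≤ gaussianReal 0 1 (Set.Ici w) := by
          apply measure_mono
          intro x hx
          have := hx.1
          simp only [Set.mem_Ici]
          linarith
      _ = ENNReal.ofReal ε := hw
  · -- -a ≥ z + w : interval ⊆ Iic (-w)
    calc gaussianReal 0 1 (Set.Ioo (a - z) (a + z))
        ≤ gaussianReal 0 1 (Set.Iic (-w)) := by
          apply measure_mono
          intro x hx
          have := hx.2
          simp only [Set.mem_Iic]
          linarith
      _ = ENNReal.ofReal ε := (gauss_neg_symm w).trans hw
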